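/- arXiv:2410.07382 — 3 statements merged into one kernel-verified Lean document; each statement's English description precedes it below -/
import Mathlib

section
/- In a rooted tree with n nodes, on every path from the root to a leaf, the number of slow edges (edges (parent(u),u) with h₂(u) < h₂(parent(u))) is at most log₂ n. -/
structure RadioTree (V : Type) [Fintype V] [DecidableEq V] where
  root : V
  parent : V → V
  lvl : V → ℕ
  lvl_root : lvl root = 0
  lvl_parent : ∀ v, v ≠ root → lvl v = lvl (parent v) + 1

namespace RadioTree

variable {V : Type} [Fintype V] [DecidableEq V]

/-- The children of `v`: the non-root nodes whose parent is `v`. -/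
def children (T : RadioTree V) (v : V) : Finset V :=
  Finset.univ.filter fun u => u ≠ T.root ∧ T.parent u = v

def IsLeaf (T : RadioTree V) (v : V) : Prop := T.children v = ∅

/-- `h2` is the 2-height function of the rooted tree `T`:
`h2 v = 0` for leaves; otherwise, with `m` the maximum 2-height among the
children of `v`, `h2 v = m` if exactly one child attains `m`, and
`h2 v = m + 1` if at least two children attain `m`. -/
def IsH2 (T : RadioTree V) (h2 : V → ℕ) : Prop :=
  ∀ v,
    (T.children v = ∅ → h2 v = 0) ∧
    (T.children v ≠ ∅ →
      (((T.children v).filter fun u => h2 u = (T.children v).sup h2).card = 1 →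
        h2 v = (T.children v).sup h2) ∧
      (2 ≤ ((T.children v).filter fun u => h2 u = (T.children v).sup h2).card →
        h2 v = (T.children v).sup h2 + 1))

/-- `u` lies in the subtree rooted at `v`. -/
def InSubtree (T : RadioTree V) (v u : V) : Prop :=
  ∃ k, T.parent^[k] u = v ∧ T.lvl u = T.lvl v + k

end RadioTree

namespace RadioTree

variable {V : Type} [Fintype V] [DecidableEq V]

noncomputable def subtree (T : RadioTree V) (v : V) : Finset V :=
  @Finset.filter _ (fun u => T.InSubtree v u) (Classical.decPred _) Finset.univ

lemma mem_subtree {T : RadioTree V} {v u : V} :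
    u ∈ T.subtree v ↔ T.InSubtree v u := by
  simp [subtree]

lemma self_mem_subtree (T : RadioTree V) (v : V) : v ∈ T.subtree v :=
  mem_subtree.2 ⟨0, rfl, rfl⟩

lemma lvl_child {T : RadioTree V} {v u : V} (hu : u ∈ T.children v) :
    T.lvl u = T.lvl v + 1 := by
  simp only [children, Finset.mem_filter] at hu
  rw [T.lvl_parent u hu.2.1, hu.2.2]

lemma subtree_mono {T : RadioTree V} {v u : V} (hu : u ∈ T.children v) :
    T.subtree u ⊆ T.subtree v := by
  intro w hw
  obtain ⟨k, hk1, hk2⟩ := mem_subtree.1 hw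
  have hl := lvl_child hu
  simp only [children, Finset.mem_filter] at hu
  refine mem_subtree.2 ⟨k + 1, ?_, ?_⟩
  · rw [Function.iterate_succ_apply', hk1, hu.2.2]
  · rw [hk2, hl]; ring

lemma not_self_mem_subtree_child {T : RadioTree V} {v u : V} (hu : u ∈ T.children v) :
    v ∉ T.subtree u := by
  intro hv
  obtain ⟨k, _, hk2⟩ := mem_subtree.1 hv
  rw [lvl_child hu] at hk2
  omega

lemma subtree_disjoint {T : RadioTree V} {v u₁ u₂ : V} (h1 : u₁ ∈ T.children v)
    (h2 : u₂ ∈ T.children v) (hne : u₁ ≠ u₂) :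
    Disjoint (T.subtree u₁) (T.subtree u₂) := by
  rw [Finset.disjoint_left]
  intro w hw1 hw2
  obtain ⟨k₁, ha1, ha2⟩ := mem_subtree.1 hw1
  obtain ⟨k₂, hb1, hb2⟩ := mem_subtree.1 hw2
  have : k₁ = k₂ := by
    rw [lvl_child h1] at ha2; rw [lvl_child h2] at hb2; omega
  exact hne (by rw [← ha1, this, hb1])

lemma h2_le_parent {T : RadioTree V} {h2 : V → ℕ} (hh2 : T.IsH2 h2)
    {v u : V} (hu : u ∈ T.children v) : h2 u ≤ h2 v := by
  have hne : T.children v ≠ ∅ := by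
    intro h; rw [h] at hu; exact absurd hu (Finset.notMem_empty u)
  have hsup : h2 u ≤ (T.children v).sup h2 := Finset.le_sup hu
  have hfil : 1 ≤ ((T.children v).filter fun u => h2 u = (T.children v).sup h2).card := by
    rw [Nat.one_le_iff_ne_zero, ← Nat.pos_iff_ne_zero, Finset.card_pos]
    obtain ⟨w, hw, hweq⟩ := Finset.exists_mem_eq_sup _ ⟨u, hu⟩ h2
    exact ⟨w, Finset.mem_filter.2 ⟨hw, hweq.symm⟩⟩
  rcases eq_or_lt_of_le hfil with h | h
  · rw [((hh2 v).2 hne).1 h.symm]; exact hsup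
  · rw [((hh2 v).2 hne).2 h]; omega

lemma subtree_card_lower (T : RadioTree V) (h2 : V → ℕ) (hh2 : T.IsH2 h2) :
    ∀ n v, (T.subtree v).card ≤ n → 2 ^ h2 v ≤ (T.subtree v).card := by
  intro n
  induction n with
  | zero => intro v hv
            have := Finset.card_pos.2 ⟨v, T.self_mem_subtree v⟩
            omega
  | succ n ih =>
    intro v hv
    by_cases hc : T.children v = ∅
    · rw [(hh2 v).1 hc, pow_zero]
      exact Finset.card_pos.2 ⟨v, T.self_mem_subtree v⟩
    have key : ∀ u ∈ T.children v, (T.subtree u).card ≤ n := by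
      intro u hu
      have hss : T.subtree u ⊂ T.subtree v :=
        ⟨subtree_mono hu, fun h => not_self_mem_subtree_child hu (h (T.self_mem_subtree v))⟩
      have := Finset.card_lt_card hss
      omega
    set m := (T.children v).sup h2 with hm
    set F := (T.children v).filter fun u => h2 u = m with hF
    have hfil : 1 ≤ F.card := by
      rw [Nat.one_le_iff_ne_zero, ← Nat.pos_iff_ne_zero, Finset.card_pos]
      obtain ⟨u, hu⟩ := Finset.nonempty_iff_ne_empty.2 hc
      obtain ⟨w, hw, hweq⟩ := Finset.exists_mem_eq_sup _ ⟨u, hu⟩ h2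
      exact ⟨w, Finset.mem_filter.2 ⟨hw, hweq.symm⟩⟩
    rcases eq_or_lt_of_le hfil with h1 | h2c
    · -- exactly one child attains m: h2 v = m
      rw [((hh2 v).2 hc).1 h1.symm, ← hm]
      obtain ⟨u, hu⟩ := Finset.card_pos.1 (by omega : 0 < F.card)
      have hu' := Finset.mem_filter.1 hu
      calc 2 ^ m = 2 ^ h2 u := by rw [hu'.2]
        _ ≤ (T.subtree u).card := ih u (key u hu'.1)
        _ ≤ (T.subtree v).card := Finset.card_le_card (subtree_mono hu'.1)
    · -- at least two children attain m
      rw [((hh2 v).2 hc).2 h2c, ← hm]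
      obtain ⟨u₁, hu₁, u₂, hu₂, hne⟩ := Finset.one_lt_card.1 h2c
      have hu₁' := Finset.mem_filter.1 hu₁
      have hu₂' := Finset.mem_filter.1 hu₂
      have hdisj := subtree_disjoint hu₁'.1 hu₂'.1 hne
      calc 2 ^ (m + 1) = 2 ^ m + 2 ^ m := by ring
        _ ≤ (T.subtree u₁).card + (T.subtree u₂).card := by
            have a1 := ih u₁ (key u₁ hu₁'.1); have a2 := ih u₂ (key u₂ hu₂'.1)
            rw [hu₁'.2] at a1; rw [hu₂'.2] at a2
            omega
        _ = (T.subtree u₁ ∪ T.subtree u₂).card := (Finset.card_union_of_disjoint hdisj).symm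
        _ ≤ (T.subtree v).card := Finset.card_le_card
            (Finset.union_subset (subtree_mono hu₁'.1) (subtree_mono hu₂'.1))

lemma lvl_iterate (T : RadioTree V) (v : V) :
    ∀ k, k ≤ T.lvl v → T.lvl (T.parent^[k] v) = T.lvl v - k := by
  intro k
  induction k with
  | zero => simp
  | succ k ih =>
    intro hk
    have h1 := ih (by omega)
    have hne : T.parent^[k] v ≠ T.root := by
      intro h; rw [h, T.lvl_root] at h1; omega
    rw [Function.iterate_succ_apply']
    have := T.lvl_parent _ hne
    omega

lemma count_le (f : ℕ → ℕ) : ∀ n, (∀ k < n, f k ≤ f (k+1)) →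
    ((Finset.range n).filter fun k => f k ≠ f (k+1)).card ≤ f n := by
  intro n
  induction n with
  | zero => simp
  | succ n ih =>
    intro hf
    rw [Finset.range_add_one, Finset.filter_insert]
    have ihn := ih fun k hk => hf k (by omega)
    by_cases hp : f n ≠ f (n + 1)
    · rw [if_pos hp, Finset.card_insert_of_notMem (by simp)]
      have := hf n (by omega)
      omega
    · rw [if_neg hp]
      have := hf n (by omega)
      omega

end RadioTree

/-- on every path from the root to a leaf `ℓ` (given by iterating
the parent map `lvl ℓ` times), the number of slow edges is at most `log₂ n`. -/
theorem stmt4 {V : Type} [Fintype V] [DecidableEq V] (T : RadioTree V)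
    (h2 : V → ℕ) (hh2 : T.IsH2 h2) (ℓ : V) (hleaf : T.IsLeaf ℓ) :
    ((((Finset.range (T.lvl ℓ)).filter fun k =>
        h2 (T.parent^[k] ℓ) ≠ h2 (T.parent^[k+1] ℓ)).card : ℝ))
      ≤ Real.logb 2 (Fintype.card V) := by
  set f : ℕ → ℕ := fun k => h2 (T.parent^[k] ℓ) with hf
  have hmono : ∀ k < T.lvl ℓ, f k ≤ f (k + 1) := by
    intro k hk
    have hlvl := T.lvl_iterate ℓ k (le_of_lt hk)
    have hne : T.parent^[k] ℓ ≠ T.root := by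
      intro h; rw [h, T.lvl_root] at hlvl; omega
    have hchild : T.parent^[k] ℓ ∈ T.children (T.parent (T.parent^[k] ℓ)) := by
      simp [RadioTree.children, hne]
    have := RadioTree.h2_le_parent hh2 hchild
    simpa [hf, Function.iterate_succ_apply'] using this
  have hcount := RadioTree.count_le f (T.lvl ℓ) hmono
  set r := T.parent^[T.lvl ℓ] ℓ with hr
  have hpow : 2 ^ f (T.lvl ℓ) ≤ Fintype.card V :=
    le_trans (T.subtree_card_lower h2 hh2 (T.subtree r).card r le_rfl)
      (Finset.card_le_card (Finset.subset_univ _) |>.trans_eq (Finset.card_univ))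
  have h1 : ((Finset.range (T.lvl ℓ)).filter fun k =>
      h2 (T.parent^[k] ℓ) ≠ h2 (T.parent^[k+1] ℓ)).card ≤ f (T.lvl ℓ) := hcount
  have h2' : (f (T.lvl ℓ) : ℝ) ≤ Real.logb 2 (Fintype.card V) := by
    have : ((2:ℝ) ^ f (T.lvl ℓ)) ≤ (Fintype.card V : ℝ) := by
      exact_mod_cast hpow
    calc (f (T.lvl ℓ) : ℝ) = Real.logb 2 ((2:ℝ) ^ f (T.lvl ℓ)) := by
          rw [Real.logb_pow, Real.logb_self_eq_one (by norm_num)]; ring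
      _ ≤ Real.logb 2 (Fintype.card V) :=
          Real.logb_le_logb_of_le (by norm_num) (by positivity) this
  calc (((Finset.range (T.lvl ℓ)).filter fun k =>
        h2 (T.parent^[k] ℓ) ≠ h2 (T.parent^[k+1] ℓ)).card : ℝ)
      ≤ (f (T.lvl ℓ) : ℝ) := by exact_mod_cast h1
    _ ≤ Real.logb 2 (Fintype.card V) := h2'
end

section
/- For every connected graph G = (V, E) and every node r ∈ V, there exists a BFS spanning tree T of G rooted at r that is a 2-height respecting tree, i.e., for any two nodes u, u' at the same level with h₂(u) = h₂(u') = h₂(parent(u)) = h₂(parent(u')), there is no node v adjacent in G to both u and u' with level(v) = level(u) − 1. -/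
lemma RadioTree.mem_children {V : Type} [Fintype V] [DecidableEq V]
    (T : RadioTree V) {v u : V} :
    u ∈ T.children v ↔ u ≠ T.root ∧ T.parent u = v := by
  unfold RadioTree.children; simp

/-! ### Auxiliary construction -/

namespace Stmt8Aux

open Finset
open scoped Classical

variable {V : Type} [Fintype V] [LinearOrder V] (G : SimpleGraph V) (r : V)

/-- Neighbors of `v` one level below. -/
noncomputable def lowN (v : V) : Finset V :=
  univ.filter fun w => G.Adj w v ∧ G.dist r w + 1 = G.dist r v

/-- Common neighbors of `u` and `u'` one level below `u`. -/
noncomputable def comL (u u' : V) : Finset V :=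
  univ.filter fun w => G.Adj w u ∧ G.Adj w u' ∧ G.dist r w + 1 = G.dist r u

/-- Vertices at level `ℓ`. -/
noncomputable def lvlSet (ℓ : ℕ) : Finset V :=
  univ.filter fun u => G.dist r u = ℓ

/-- Children of `v` under parent map `p`, with the level condition built in. -/
noncomputable def lvlCh (p : V → V) (v : V) : Finset V :=
  univ.filter fun u => u ≠ r ∧ p u = v ∧ G.dist r u = G.dist r v + 1

lemma mem_lowN {v u : V} :
    u ∈ lowN G r v ↔ G.Adj u v ∧ G.dist r u + 1 = G.dist r v := by
  unfold lowN; simp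

lemma mem_comL {u u' w : V} :
    w ∈ comL G r u u' ↔ G.Adj w u ∧ G.Adj w u' ∧ G.dist r w + 1 = G.dist r u := by
  unfold comL; simp

lemma mem_lvlSet {ℓ : ℕ} {u : V} : u ∈ lvlSet G r ℓ ↔ G.dist r u = ℓ := by
  unfold lvlSet; simp

lemma mem_lvlCh {p : V → V} {v u : V} :
    u ∈ lvlCh G r p v ↔ u ≠ r ∧ p u = v ∧ G.dist r u = G.dist r v + 1 := by
  unfold lvlCh; simp

/-- The combination rule for 2-heights. -/
noncomputable def h2comb (C : Finset V) (f : V → ℕ) : ℕ :=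
  if C = ∅ then 0
  else if (C.filter fun u => f u = C.sup f).card = 1 then C.sup f else C.sup f + 1

/-- Termination measure : number of vertices strictly deeper than `v`. -/
noncomputable def meas (v : V) : ℕ :=
  (univ.filter fun w => G.dist r v < G.dist r w).card

lemma meas_lt {u v : V} (h : G.dist r u = G.dist r v + 1) :
    meas G r u < meas G r v := by
  unfold meas
  apply Finset.card_lt_card
  have hsub : (univ.filter fun w => G.dist r u < G.dist r w) ⊆
      (univ.filter fun w => G.dist r v < G.dist r w) := by
    intro w hw
    rw [mem_filter] at hw ⊢
    exact ⟨hw.1, by omega⟩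
  rw [Finset.ssubset_iff_of_subset hsub]
  exact ⟨u, by rw [mem_filter]; exact ⟨mem_univ _, by omega⟩,
    by rw [mem_filter]; push_neg; intro _; omega⟩

/-- Canonical 2-height function for the parent map `p` (with level conditions). -/
noncomputable def H2f (p : V → V) (v : V) : ℕ :=
  if (lvlCh G r p v) = ∅ then 0
  else
    if ((lvlCh G r p v).attach.filter fun u =>
          H2f p u.1 = (lvlCh G r p v).attach.sup fun u => H2f p u.1).card = 1 then
      (lvlCh G r p v).attach.sup fun u => H2f p u.1
    else ((lvlCh G r p v).attach.sup fun u => H2f p u.1) + 1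
termination_by meas G r v
decreasing_by
  all_goals
    first
      | (have h := u.2
         unfold lvlCh at h
         rw [Finset.mem_filter] at h
         exact meas_lt G r h.2.2.2)
      | (rename { x // x ∈ lvlCh G r p v } => u
         have h := u.2
         unfold lvlCh at h
         rw [Finset.mem_filter] at h
         exact meas_lt G r h.2.2.2)

lemma card_filter_attach (s0 : Finset V) (g : V → ℕ) (n : ℕ) :
    (s0.attach.filter fun u => g u.1 = n).card = (s0.filter fun u => g u = n).card := by
  rw [Finset.filter_attach (fun u => g u = n) s0]
  simp

lemma H2f_eq (p : V → V) (v : V) :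
    H2f G r p v = h2comb (lvlCh G r p v) (H2f G r p) := by
  by_cases hC : lvlCh G r p v = ∅
  · rw [H2f, h2comb, if_pos hC, if_pos hC]
  · rw [H2f, h2comb, if_neg hC, if_neg hC]
    simp only [Finset.sup_attach]
    rw [card_filter_attach]

lemma h2comb_congr (C : Finset V) {f g : V → ℕ} (h : ∀ u ∈ C, f u = g u) :
    h2comb C f = h2comb C g := by
  have hs : C.sup f = C.sup g := Finset.sup_congr rfl h
  have hf : (C.filter fun u => f u = C.sup f) = C.filter fun u => g u = C.sup g :=
    Finset.filter_congr fun u hu => by rw [h u hu, hs]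
  rw [h2comb, h2comb, hf, hs]

/-- `H2f p v` only depends on `p` strictly below the level of `v`. -/
lemma H2f_congr {p q : V → V} : ∀ v,
    (∀ w, G.dist r v < G.dist r w → p w = q w) → H2f G r p v = H2f G r q v := by
  have main : ∀ n v, meas G r v = n →
      (∀ w, G.dist r v < G.dist r w → p w = q w) → H2f G r p v = H2f G r q v := by
    intro n
    induction n using Nat.strong_induction_on with
    | _ n ih =>
      intro v hn hpq
      have hCh : lvlCh G r p v = lvlCh G r q v := by
        ext u
        unfold lvlCh
        simp only [mem_filter, mem_univ, true_and]
        constructor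
        · rintro ⟨h1, h2, h3⟩
          exact ⟨h1, by rw [← hpq u (by omega)]; exact h2, h3⟩
        · rintro ⟨h1, h2, h3⟩
          exact ⟨h1, by rw [hpq u (by omega)]; exact h2, h3⟩
      rw [H2f_eq, H2f_eq, hCh]
      apply h2comb_congr
      intro u hu
      have hu' : G.dist r u = G.dist r v + 1 := by
        unfold lvlCh at hu
        rw [mem_filter] at hu
        exact hu.2.2.2
      exact ih (meas G r u) (by rw [← hn]; exact meas_lt G r hu') u rfl
        (fun w hw => hpq w (by omega))
  exact fun v h => main (meas G r v) v rfl h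

/-- A canonical element of a finite set. -/
noncomputable def pick (s : Finset V) : V := if h : s.Nonempty then s.min' h else r

lemma pick_mem {s : Finset V} (h : s.Nonempty) : pick r s ∈ s := by
  rw [pick, dif_pos h]; exact s.min'_mem h

/-- candidates for the greedy matching -/
noncomputable def gmA (R : V → V → Prop) (s : Finset V) : Finset V :=
  s.filter fun a => ∃ b ∈ s, R a b

lemma gmB_ne {R : V → V → Prop} {s : Finset V} (h : (gmA R s).Nonempty) :
    (s.filter fun b => R ((gmA R s).min' h) b).Nonempty := by
  have hm := (gmA R s).min'_mem h
  unfold gmA at hm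
  rw [mem_filter] at hm
  obtain ⟨b, hb, hr⟩ := hm.2
  exact ⟨b, by rw [mem_filter]; exact ⟨hb, hr⟩⟩

/-- Greedy maximal matching on `s` w.r.t. relation `R`. -/
noncomputable def gm (R : V → V → Prop) (s : Finset V) : V → Option V :=
  if h : (gmA R s).Nonempty then
    let a := (gmA R s).min' h
    let b := (s.filter fun b => R a b).min' (gmB_ne h)
    fun x => if x = a then some b else if x = b then some a
      else gm R ((s.erase a).erase b) x
  else fun _ => none
termination_by s.card
decreasing_by
  · have ha : (gmA R s).min' h ∈ s := by
      have hmm := (gmA R s).min'_mem h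
      unfold gmA at hmm
      rw [mem_filter] at hmm
      exact hmm.1
    calc ((s.erase ((gmA R s).min' h)).erase _).card
        ≤ (s.erase ((gmA R s).min' h)).card := card_erase_le
      _ < s.card := card_erase_lt_of_mem ha

lemma gm_spec (R : V → V → Prop) (hsym : ∀ a b, R a b → R b a)
    (hirr : ∀ a, ¬ R a a) (s : Finset V) :
    (∀ x w, gm R s x = some w → x ∈ s ∧ w ∈ s ∧ R x w ∧ gm R s w = some x) ∧
    (∀ x y, x ∈ s → y ∈ s → R x y → (gm R s x).isSome ∨ (gm R s y).isSome) := by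
  induction s using Finset.strongInduction with
  | _ s ih =>
    by_cases h : (gmA R s).Nonempty
    · set a := (gmA R s).min' h with ha_def
      set b := (s.filter fun b => R a b).min' (gmB_ne h) with hb_def
      have hgm : ∀ x, gm R s x = if x = a then some b else if x = b then some a
          else gm R ((s.erase a).erase b) x := by
        intro x
        conv_lhs => rw [gm, dif_pos h]
      have ha : a ∈ s ∧ ∃ b' ∈ s, R a b' := by
        have hmm := (gmA R s).min'_mem h
        unfold gmA at hmm
        rw [mem_filter] at hmm
        exact hmm
      have hb : b ∈ s ∧ R a b := by
        have hmm := (s.filter fun b => R a b).min'_mem (gmB_ne h)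
        rw [mem_filter] at hmm
        exact hmm
      have hab : a ≠ b := fun e => hirr a (by nth_rewrite 2 [e]; exact hb.2)
      have hss : (s.erase a).erase b ⊂ s :=
        lt_of_le_of_lt (erase_subset _ _) (Finset.erase_ssubset ha.1)
      obtain ⟨ih1, ih2⟩ := ih _ hss
      have hsub : (s.erase a).erase b ⊆ s := subset_of_ssubset hss
      constructor
      · intro x w hxw
        rw [hgm x] at hxw
        by_cases hxa : x = a
        · rw [if_pos hxa] at hxw
          have hwb : w = b := (Option.some.inj hxw).symm
          subst hwb; subst hxa
          refine ⟨ha.1, hb.1, hb.2, ?_⟩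
          rw [hgm b]
          simp [Ne.symm hab]
        · rw [if_neg hxa] at hxw
          by_cases hxb : x = b
          · rw [if_pos hxb] at hxw
            have hwa : w = a := (Option.some.inj hxw).symm
            subst hwa; subst hxb
            refine ⟨hb.1, ha.1, hsym a b hb.2, ?_⟩
            rw [hgm a]
            simp
          · rw [if_neg hxb] at hxw
            obtain ⟨hx1, hw1, hR1, hgm1⟩ := ih1 x w hxw
            refine ⟨hsub hx1, hsub hw1, hR1, ?_⟩
            rw [mem_erase, mem_erase] at hw1
            rw [hgm w]
            rw [if_neg hw1.2.1, if_neg hw1.1]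
            exact hgm1
      · intro x y hx hy hR
        by_cases hxa : x = a
        · left; rw [hgm x]; simp [hxa]
        by_cases hxb : x = b
        · left; rw [hgm x]; simp [hxb, Ne.symm hab]
        by_cases hya : y = a
        · right; rw [hgm y]; simp [hya]
        by_cases hyb : y = b
        · right; rw [hgm y]; simp [hyb, Ne.symm hab]
        have hx' : x ∈ (s.erase a).erase b := by
          rw [mem_erase, mem_erase]; exact ⟨hxb, hxa, hx⟩
        have hy' : y ∈ (s.erase a).erase b := by
          rw [mem_erase, mem_erase]; exact ⟨hyb, hya, hy⟩
        rcases ih2 x y hx' hy' hR with h1 | h1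
        · left; rw [hgm x]; simp only [if_neg hxa, if_neg hxb]; exact h1
        · right; rw [hgm y]; simp only [if_neg hya, if_neg hyb]; exact h1
    · have hgm : ∀ x, gm R s x = none := by
        intro x
        conv_lhs => rw [gm, dif_neg h]
      constructor
      · intro x w hxw
        rw [hgm x] at hxw
        simp at hxw
      · intro x y hx hy hR
        exfalso
        exact h ⟨x, by unfold gmA; rw [mem_filter]; exact ⟨hx, y, hy, hR⟩⟩

/-- The relation for the matching at a level: equal level, equal 2-height,
and existence of a common neighbor below. -/
noncomputable def Rrel (p : V → V) (u u' : V) : Prop :=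
  u ≠ u' ∧ G.dist r u = G.dist r u' ∧ H2f G r p u = H2f G r p u' ∧
    (comL G r u u').Nonempty

lemma Rrel_symm (p : V → V) : ∀ a b, Rrel G r p a b → Rrel G r p b a := by
  rintro a b ⟨h1, h2, h3, w, hw⟩
  refine ⟨Ne.symm h1, h2.symm, h3.symm, ⟨w, ?_⟩⟩
  unfold comL at hw ⊢
  rw [mem_filter] at hw ⊢
  exact ⟨mem_univ _, hw.2.2.1, hw.2.1, by rw [← h2]; exact hw.2.2.2⟩

lemma Rrel_irrefl (p : V → V) : ∀ a, ¬ Rrel G r p a a := fun _ h => h.1 rfl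

lemma comL_subset_lowN (u u' : V) : comL G r u u' ⊆ lowN G r u := by
  intro w hw
  unfold comL at hw
  unfold lowN
  rw [mem_filter] at hw ⊢
  exact ⟨hw.1, hw.2.1, hw.2.2.2⟩

lemma comL_comm {u u' : V} (h : G.dist r u = G.dist r u') :
    comL G r u u' = comL G r u' u := by
  ext w
  unfold comL
  rw [mem_filter, mem_filter]
  constructor
  · rintro ⟨h0, h1, h2, h3⟩; exact ⟨h0, h2, h1, by omega⟩
  · rintro ⟨h0, h1, h2, h3⟩; exact ⟨h0, h2, h1, by omega⟩

/-- The parent assignment of `v`, given the parent map `p` for deeper levels. -/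
noncomputable def assign (p : V → V) (v : V) : V :=
  match gm (Rrel G r p) (lvlSet G r (G.dist r v)) v with
  | some w => pick r (comL G r v w)
  | none => pick r (lowN G r v)

/-- Stage `k+1` assigns parents at level `Fintype.card V - (k+1)`. -/
noncomputable def parK : ℕ → V → V
  | 0, _ => r
  | (k+1), v =>
      if v ≠ r ∧ G.dist r v + (k + 1) = Fintype.card V then assign G r (parK k) v
      else parK k v

/-- The final parent map. -/
noncomputable def par (v : V) : V := parK G r (Fintype.card V) v

lemma parK_agree (k k' : ℕ) (h : k ≤ k') {v : V}
    (hv : Fintype.card V ≤ G.dist r v + k) : parK G r k' v = parK G r k v := by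
  induction k' with
  | zero =>
    have : k = 0 := Nat.le_zero.mp h
    rw [this]
  | succ k' ih =>
    rcases Nat.lt_or_ge k (k' + 1) with hlt | hge
    · have hk : k ≤ k' := by omega
      rw [parK, if_neg ?_]
      · exact ih hk
      · rintro ⟨_, hc⟩
        omega
    · have : k = k' + 1 := by omega
      rw [this]

variable (hconn : G.Connected)
include hconn

lemma dist_lt_card (v : V) : G.dist r v < Fintype.card V := by
  obtain ⟨p, hp, hl⟩ := SimpleGraph.Reachable.exists_path_of_dist (hconn r v)
  exact hl ▸ hp.length_lt

lemma dist_pos {v : V} (h : v ≠ r) : 0 < G.dist r v := by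
  rcases Nat.eq_zero_or_pos (G.dist r v) with h0 | h0
  · exact absurd ((hconn.dist_eq_zero_iff).mp h0).symm h
  · exact h0

lemma lowN_nonempty {v : V} (h : v ≠ r) : (lowN G r v).Nonempty := by
  have hpos : 0 < G.dist r v := dist_pos G r hconn h
  obtain ⟨p, hl⟩ := SimpleGraph.Reachable.exists_walk_length_eq_dist (hconn v r)
  rw [SimpleGraph.dist_comm] at hl
  cases p with
  | nil => rw [← hl] at hpos; simp at hpos
  | cons hadj q =>
    rename_i w
    refine ⟨w, ?_⟩
    have h1 : G.dist w r ≤ q.length := SimpleGraph.dist_le q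
    have h2 : G.dist r v ≤ G.dist r w + 1 := by
      have ht := hconn.dist_triangle (u := r) (v := w) (w := v)
      have : G.dist w v ≤ 1 :=
        SimpleGraph.dist_le (SimpleGraph.Walk.cons hadj.symm SimpleGraph.Walk.nil)
      omega
    have h3 : G.dist r w ≤ q.length := by rw [SimpleGraph.dist_comm]; exact h1
    simp only [SimpleGraph.Walk.length_cons] at hl
    unfold lowN
    rw [mem_filter]
    exact ⟨mem_univ _, hadj.symm, by omega⟩

lemma par_eq_assign {v : V} (hv : v ≠ r) :
    par G r v = assign G r (parK G r (Fintype.card V - G.dist r v - 1)) v := by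
  have h1 : G.dist r v < Fintype.card V := dist_lt_card G r hconn v
  have h0 : 0 < G.dist r v := dist_pos G r hconn hv
  unfold par
  rw [parK_agree G r (Fintype.card V - G.dist r v) (Fintype.card V) (by omega) (by omega)]
  have h2 : Fintype.card V - G.dist r v = (Fintype.card V - G.dist r v - 1) + 1 := by
    omega
  rw [h2, parK, if_pos ⟨hv, by omega⟩]
  norm_num

lemma H2f_stage (x : V) :
    H2f G r (par G r) x = H2f G r (parK G r (Fintype.card V - G.dist r x - 1)) x := by
  have h1 : G.dist r x < Fintype.card V := dist_lt_card G r hconn x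
  apply H2f_congr
  intro w hw
  exact parK_agree G r (Fintype.card V - G.dist r x - 1) (Fintype.card V) (by omega) (by omega)

lemma par_lowN {v : V} (hv : v ≠ r) : par G r v ∈ lowN G r v := by
  rw [par_eq_assign G r hconn hv]
  unfold assign
  rcases hM : gm (Rrel G r (parK G r (Fintype.card V - G.dist r v - 1)))
      (lvlSet G r (G.dist r v)) v with _ | w
  · exact pick_mem r (lowN_nonempty G r hconn hv)
  · have hspec := (gm_spec (Rrel G r (parK G r (Fintype.card V - G.dist r v - 1)))
      (Rrel_symm G r _) (Rrel_irrefl G r _) (lvlSet G r (G.dist r v))).1 v w hM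
    exact comL_subset_lowN G r v w (pick_mem r hspec.2.2.1.2.2.2)

lemma children_eq [DecidableEq V] (T : RadioTree V) (hroot : T.root = r)
    (hpar : T.parent = par G r) (hlvl : T.lvl = G.dist r) (v : V) :
    T.children v = lvlCh G r (par G r) v := by
  ext u
  rw [RadioTree.mem_children, mem_lvlCh, hroot, hpar]
  constructor
  · rintro ⟨h1, h2⟩
    refine ⟨h1, h2, ?_⟩
    have hl := (mem_lowN G r).mp (par_lowN G r hconn (v := u) h1)
    rw [h2] at hl
    omega
  · rintro ⟨h1, h2, _⟩
    exact ⟨h1, h2⟩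

lemma h2_unique [DecidableEq V] (T : RadioTree V) (hroot : T.root = r)
    (hpar : T.parent = par G r) (hlvl : T.lvl = G.dist r) (h2 : V → ℕ)
    (hh : T.IsH2 h2) : ∀ v, h2 v = H2f G r (par G r) v := by
  have main : ∀ n v, meas G r v = n → h2 v = H2f G r (par G r) v := by
    intro n
    induction n using Nat.strong_induction_on with
    | _ n ih =>
      intro v hn
      have hch := children_eq G r hconn T hroot hpar hlvl v
      obtain ⟨c1, c2⟩ := hh v
      rw [H2f_eq]
      by_cases hC : lvlCh G r (par G r) v = ∅
      · rw [h2comb, if_pos hC]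
        exact c1 (by rw [hch, hC])
      · have hCne' : T.children v ≠ ∅ := by rw [hch]; exact hC
        obtain ⟨d1, d2⟩ := c2 hCne'
        set C := lvlCh G r (par G r) v with hCdef
        have hmem_lvl : ∀ u ∈ C, G.dist r u = G.dist r v + 1 := by
          intro u hu
          rw [hCdef] at hu
          exact ((mem_lvlCh G r).mp hu).2.2
        have hvals : ∀ u ∈ C, h2 u = H2f G r (par G r) u := fun u hu =>
          ih (meas G r u) (by rw [← hn]; exact meas_lt G r (hmem_lvl u hu)) u rfl
        have hsup : C.sup h2 = C.sup (H2f G r (par G r)) := Finset.sup_congr rfl hvals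
        have hfil : (C.filter fun u => h2 u = C.sup h2) =
            C.filter fun u => H2f G r (par G r) u = C.sup (H2f G r (par G r)) :=
          Finset.filter_congr fun u hu => by rw [hvals u hu, hsup]
        obtain ⟨u0, hu0, hsup0⟩ := Finset.exists_mem_eq_sup C
          (Finset.nonempty_iff_ne_empty.mpr hC) (H2f G r (par G r))
        have hpos : 0 < (C.filter fun u =>
            H2f G r (par G r) u = C.sup (H2f G r (par G r))).card :=
          card_pos.mpr ⟨u0, mem_filter.mpr ⟨hu0, hsup0.symm⟩⟩
        rw [h2comb, if_neg hC]
        by_cases h1 : (C.filter fun u =>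
            H2f G r (par G r) u = C.sup (H2f G r (par G r))).card = 1
        · rw [if_pos h1]
          have := d1 (by rw [hch]; rw [show (C.filter fun u => h2 u = C.sup h2) = _ from hfil]; exact h1)
          rw [this, hch, hsup]
        · rw [if_neg h1]
          have := d2 (by rw [hch]; rw [show (C.filter fun u => h2 u = C.sup h2) = _ from hfil]; omega)
          rw [this, hch, hsup]
  exact fun v => main (meas G r v) v rfl

end Stmt8Aux

/-- every connected graph `G` with a distinguished node `r` has a
BFS spanning tree rooted at `r` which is a 2-height respecting tree: for any
two distinct nodes `u ≠ u'` at the same level with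
`h₂ u = h₂ u' = h₂ (parent u) = h₂ (parent u')`, there is no node `v` adjacent
in `G` to both `u` and `u'` with `level v = level u - 1`. -/
theorem stmt8 {V : Type} [Fintype V] [DecidableEq V] (G : SimpleGraph V)
    (hconn : G.Connected) (r : V) :
    ∃ T : RadioTree V, T.root = r ∧
      (∀ v, v ≠ r → G.Adj (T.parent v) v) ∧
      (∀ v, T.lvl v = G.dist r v) ∧
      (∀ h2 : V → ℕ, T.IsH2 h2 →
        ∀ u u' : V, u ≠ u' → u ≠ r → u' ≠ r →
          T.lvl u = T.lvl u' →
          h2 u = h2 u' → h2 u = h2 (T.parent u) → h2 u' = h2 (T.parent u') →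
          ¬ ∃ v : V, G.Adj v u ∧ G.Adj v u' ∧ T.lvl v + 1 = T.lvl u) := by
  classical
  letI : LinearOrder V := LinearOrder.lift' (Fintype.equivFin V) (Fintype.equivFin V).injective
  set p := Stmt8Aux.par G r with hp
  have hlvl_par : ∀ v, v ≠ r → G.dist r (p v) + 1 = G.dist r v ∧ G.Adj (p v) v := by
    intro v hv
    have hl := (Stmt8Aux.mem_lowN G r).mp (Stmt8Aux.par_lowN G r hconn hv)
    exact ⟨hl.2, hl.1⟩
  refine ⟨⟨r, p, G.dist r, SimpleGraph.dist_self,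
    fun v hv => by have := (hlvl_par v hv).1; omega⟩, rfl,
    fun v hv => (hlvl_par v hv).2, fun v => rfl, ?_⟩
  intro h2 hh u u' hne hur hu'r hlvleq hval hpu hpu'
  rintro ⟨v, hv1, hv2, hv3⟩
  dsimp only at hlvleq hpu hpu' hv3
  have huniq := Stmt8Aux.h2_unique G r hconn _ rfl rfl rfl h2 hh
  have hdu' : G.dist r u' = G.dist r u := hlvleq.symm
  have hupos : 0 < G.dist r u := Stmt8Aux.dist_pos G r hconn hur
  set k1 := Fintype.card V - G.dist r u - 1 with hk1
  set ps := Stmt8Aux.parK G r k1 with hps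
  have hsu : Stmt8Aux.H2f G r p u = Stmt8Aux.H2f G r ps u := Stmt8Aux.H2f_stage G r hconn u
  have hsu' : Stmt8Aux.H2f G r p u' = Stmt8Aux.H2f G r ps u' := by
    have := Stmt8Aux.H2f_stage G r hconn u'
    rw [hdu'] at this
    exact this
  have hRuu' : Stmt8Aux.Rrel G r ps u u' := by
    refine ⟨hne, hdu'.symm, ?_, ⟨v, ?_⟩⟩
    · rw [← hsu, ← hsu', ← huniq u, ← huniq u', hval]
    · exact (Stmt8Aux.mem_comL G r).mpr ⟨hv1, hv2, hv3⟩
  set s := Stmt8Aux.lvlSet G r (G.dist r u) with hs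
  have hu_mem : u ∈ s := by
    rw [hs]; exact (Stmt8Aux.mem_lvlSet G r).mpr rfl
  have hu'_mem : u' ∈ s := by
    rw [hs]; exact (Stmt8Aux.mem_lvlSet G r).mpr hdu'
  obtain ⟨g1, g2⟩ := Stmt8Aux.gm_spec (Stmt8Aux.Rrel G r ps)
    (Stmt8Aux.Rrel_symm G r ps) (Stmt8Aux.Rrel_irrefl G r ps) s
  have claim : ∀ x, G.dist r x = G.dist r u → x ≠ r → h2 x = h2 (p x) →
      ¬ (Stmt8Aux.gm (Stmt8Aux.Rrel G r ps) s x).isSome := by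
    intro x hx hxr hx2 hsome
    obtain ⟨w, hw⟩ := Option.isSome_iff_exists.mp hsome
    obtain ⟨hxs, hws, hRxw, hwx⟩ := g1 x w hw
    have hdw : G.dist r w = G.dist r u := by
      rw [hs] at hws
      exact (Stmt8Aux.mem_lvlSet G r).mp hws
    have hwr : w ≠ r := by
      intro e
      rw [e, SimpleGraph.dist_self] at hdw
      omega
    have hpx : p x = Stmt8Aux.pick r (Stmt8Aux.comL G r x w) := by
      rw [hp, Stmt8Aux.par_eq_assign G r hconn hxr]
      unfold Stmt8Aux.assign
      rw [hx]
      rw [← hk1, ← hps, ← hs, hw]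
    have hpw : p w = Stmt8Aux.pick r (Stmt8Aux.comL G r w x) := by
      rw [hp, Stmt8Aux.par_eq_assign G r hconn hwr]
      unfold Stmt8Aux.assign
      rw [hdw]
      rw [← hk1, ← hps, ← hs, hwx]
    have hcc : Stmt8Aux.comL G r w x = Stmt8Aux.comL G r x w :=
      Stmt8Aux.comL_comm G r (by omega)
    have hpeq : p w = p x := by rw [hpx, hpw, hcc]
    have hH2x : Stmt8Aux.H2f G r p x = Stmt8Aux.H2f G r ps x := by
      have := Stmt8Aux.H2f_stage G r hconn x
      rw [hx] at this
      exact this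
    have hH2w : Stmt8Aux.H2f G r p w = Stmt8Aux.H2f G r ps w := by
      have := Stmt8Aux.H2f_stage G r hconn w
      rw [hdw] at this
      exact this
    have hH2xw : Stmt8Aux.H2f G r p w = Stmt8Aux.H2f G r p x := by
      rw [hH2x, hH2w, hRxw.2.2.1]
    set q := p x with hq
    have hdx : G.dist r q + 1 = G.dist r x := by
      rw [hq]; exact (hlvl_par x hxr).1
    have hdwq : G.dist r (p w) + 1 = G.dist r w := (hlvl_par w hwr).1
    have hxq : x ∈ Stmt8Aux.lvlCh G r p q := by
      rw [Stmt8Aux.mem_lvlCh]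
      exact ⟨hxr, rfl, by omega⟩
    have hwq : w ∈ Stmt8Aux.lvlCh G r p q := by
      rw [Stmt8Aux.mem_lvlCh]
      refine ⟨hwr, hpeq, ?_⟩
      rw [hpeq] at hdwq
      omega
    set m := Stmt8Aux.H2f G r p x with hm
    set C := Stmt8Aux.lvlCh G r p q with hC
    have hsupge : m ≤ C.sup (Stmt8Aux.H2f G r p) := Finset.le_sup hxq
    have hgoal : m < Stmt8Aux.H2f G r p q := by
      rw [Stmt8Aux.H2f_eq, ← hC, Stmt8Aux.h2comb, if_neg (by rw [hC]; exact Finset.ne_empty_of_mem hxq)]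
      by_cases hs' : C.sup (Stmt8Aux.H2f G r p) = m
      · have hcard : 1 < (C.filter fun z =>
            Stmt8Aux.H2f G r p z = C.sup (Stmt8Aux.H2f G r p)).card := by
          apply Finset.one_lt_card.mpr
          refine ⟨x, Finset.mem_filter.mpr ⟨hxq, by rw [hs']⟩,
            w, Finset.mem_filter.mpr ⟨hwq, by rw [hs', hH2xw]⟩, hRxw.1⟩
        rw [if_neg (by omega)]
        omega
      · have hlt : m < C.sup (Stmt8Aux.H2f G r p) :=
          lt_of_le_of_ne hsupge (Ne.symm hs')
        split_ifs <;> omega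
    rw [huniq x, huniq (p x)] at hx2
    rw [← hp, ← hq, ← hm] at hx2
    omega
  rcases g2 u u' hu_mem hu'_mem hRuu' with hsome | hsome
  · exact claim u rfl hur hpu hsome
  · exact claim u' hdu' hu'r hpu' hsome
end

section
/- Any labeling scheme that supports deterministic gathering in every radio network must have length Ω(log Δ): specifically, in the spider graph consisting of a path v₁,…,v_D attached to Δ pendant vertices v_{D+1},…,v_{D+Δ} all adjacent to v_D, with sink v₁, any labeling scheme supporting a correct deterministic gathering algorithm must assign pairwise distinct labels to the Δ pendant vertices v_{D+1},…,v_{D+Δ}, and hence has length at least ⌈log₂ Δ⌉. -/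
open Classical

noncomputable section

/-- The spider graph on `Fin (D + Δ)`: vertices `0, …, D-1` form a path
(`0` is the sink `v₁`, `D-1` is `v_D`); vertices `D, …, D+Δ-1` are the `Δ`
pendant vertices, all adjacent to `v_D = D-1`. -/
def spider (D Δ : ℕ) : SimpleGraph (Fin (D + Δ)) :=
  SimpleGraph.fromRel fun i j =>
    (j.val = i.val + 1 ∧ j.val < D) ∨ (i.val = D - 1 ∧ D ≤ j.val)

/-- A deterministic radio algorithm, run identically by every node and
parameterized only by the node's label: given the label and the history of
received messages so far (`none` means silence or collision, `some S` means a
message with content `S`, a finite set of collected initial messages, was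
received), it decides whether to transmit in the current round.  A
transmitting node transmits its entire current knowledge. -/
def Algo : Type := ℕ → List (Option (Finset ℕ)) → Bool

/-- Synchronous execution of the radio algorithm `A` on graph `G` with labels
`label` and initial messages `inp`.  `run G label inp A t v` returns the pair
(history of messages received by `v` in rounds `< t`, knowledge of `v` at
time `t`, i.e. the set of initial messages it has collected).  A listening
node receives a message in a round iff exactly one of its neighbors
transmits in that round (no collision detection). -/
def run {V : Type} [Fintype V] (G : SimpleGraph V)
    (label : V → ℕ) (inp : V → ℕ) (A : Algo) :
    ℕ → V → List (Option (Finset ℕ)) × Finset ℕ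
  | 0 => fun v => ([], {inp v})
  | (t + 1) => fun v =>
      let hist : V → List (Option (Finset ℕ)) := fun u => (run G label inp A t u).1
      let know : V → Finset ℕ := fun u => (run G label inp A t u).2
      let act : V → Option (Finset ℕ) := fun u =>
        if A (label u) (hist u) then some (know u) else none
      let recv : Option (Finset ℕ) :=
        if h : ∃! u : V, G.Adj u v ∧ (act u).isSome then act h.choose else none
      (hist v ++ [recv], know v ∪ recv.getD ∅)

/-- The action of node `u` at time `t`: `some` of its knowledge if it
transmits, `none` if it listens. -/
def act {V : Type} [Fintype V] (G : SimpleGraph V)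
    (label : V → ℕ) (inp : V → ℕ) (A : Algo) (t : ℕ) (u : V) : Option (Finset ℕ) :=
  if A (label u) ((run G label inp A t u).1) then some ((run G label inp A t u).2) else none

/-- The message received by `v` in round `t`. -/
def recv {V : Type} [Fintype V] (G : SimpleGraph V)
    (label : V → ℕ) (inp : V → ℕ) (A : Algo) (t : ℕ) (v : V) : Option (Finset ℕ) :=
  if h : ∃! u : V, G.Adj u v ∧ (act G label inp A t u).isSome
    then act G label inp A t h.choose else none

lemma run_succ {V : Type} [Fintype V] (G : SimpleGraph V)
    (label : V → ℕ) (inp : V → ℕ) (A : Algo) (t : ℕ) (v : V) :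
    run G label inp A (t + 1) v =
      ((run G label inp A t v).1 ++ [recv G label inp A t v],
       (run G label inp A t v).2 ∪ (recv G label inp A t v).getD ∅) := rfl

lemma spider_adj_pendant (D Δ : ℕ) (hD : 1 ≤ D) (p u : Fin (D + Δ))
    (hp : D ≤ p.val) : (spider D Δ).Adj u p ↔ u.val = D - 1 := by
  simp only [spider, SimpleGraph.fromRel_adj]
  constructor
  · rintro ⟨hne, h⟩
    omega
  · intro h
    exact ⟨Fin.ne_of_val_ne (by omega), Or.inl (Or.inr ⟨h, hp⟩)⟩

/-- Key lemma: if two pendant vertices `i ≠ j` get the same label, then their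
histories coincide forever, and the initial message of `i` never reaches any
other vertex. -/
lemma pendant_key (D Δ : ℕ) (hD : 1 ≤ D) (label inp : Fin (D + Δ) → ℕ)
    (hinj : Function.Injective inp) (A : Algo)
    (i j : Fin (D + Δ)) (hi : D ≤ i.val) (hj : D ≤ j.val)
    (hlab : label i = label j) (hne : i ≠ j) :
    ∀ t, (run (spider D Δ) label inp A t i).1 = (run (spider D Δ) label inp A t j).1 ∧
      ∀ v, v ≠ i → inp i ∉ (run (spider D Δ) label inp A t v).2 := by
  set G := spider D Δ with hG
  have hwlt : D - 1 < D + Δ := by omega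
  set w : Fin (D + Δ) := ⟨D - 1, hwlt⟩ with hwdef
  have hadj : ∀ p u : Fin (D + Δ), D ≤ p.val → (G.Adj u p ↔ u = w) := by
    intro p u hp
    rw [hG, spider_adj_pendant D Δ hD p u hp]
    constructor
    · intro h; exact Fin.ext h
    · intro h; subst h; rfl
  intro t
  induction t with
  | zero =>
    refine ⟨rfl, fun v hv hmem => ?_⟩
    have : inp i = inp v := by simpa [run] using hmem
    exact hv (hinj this).symm
  | succ t ih =>
    obtain ⟨ihh, ihp⟩ := ih
    have hsome : (act G label inp A t i).isSome = (act G label inp A t j).isSome := by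
      by_cases hA : A (label j) ((run G label inp A t j).1) <;>
        simp [act, hlab, ihh, hA]
    have hrecv : ∀ p : Fin (D + Δ), D ≤ p.val →
        recv G label inp A t p =
          if (act G label inp A t w).isSome then act G label inp A t w else none := by
      intro p hp
      unfold recv
      by_cases hws : (act G label inp A t w).isSome
      · have hex : ∃! u : Fin (D + Δ), G.Adj u p ∧ (act G label inp A t u).isSome := by
          refine ⟨w, ⟨(hadj p w hp).mpr rfl, hws⟩, ?_⟩
          intro u hu; exact (hadj p u hp).mp hu.1
        rw [dif_pos hex, if_pos hws]
        have hcw : hex.choose = w := (hadj p hex.choose hp).mp hex.choose_spec.1.1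
        rw [hcw]
      · have hnex : ¬ ∃! u : Fin (D + Δ), G.Adj u p ∧ (act G label inp A t u).isSome := by
          rintro ⟨u, ⟨hu1, hu2⟩, -⟩
          have hu3 : u = w := (hadj p u hp).mp hu1
          exact hws (hu3 ▸ hu2)
        rw [dif_neg hnex, if_neg hws]
    have hreq : recv G label inp A t i = recv G label inp A t j := by
      rw [hrecv i hi, hrecv j hj]
    constructor
    · show (run G label inp A t i).1 ++ [recv G label inp A t i]
        = (run G label inp A t j).1 ++ [recv G label inp A t j]
      rw [ihh, hreq]
    · intro v hv
      show inp i ∉ (run G label inp A t v).2 ∪ (recv G label inp A t v).getD ∅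
      rw [Finset.mem_union]
      rintro (h1 | h2)
      · exact ihp v hv h1
      · unfold recv at h2
        by_cases hex : ∃! u : Fin (D + Δ), G.Adj u v ∧ (act G label inp A t u).isSome
        · rw [dif_pos hex] at h2
          have hu_spec := hex.choose_spec.1
          by_cases hAu : A (label hex.choose) ((run G label inp A t hex.choose).1)
          · have hactu : act G label inp A t hex.choose
                = some ((run G label inp A t hex.choose).2) := if_pos hAu
            rw [hactu] at h2
            simp only [Option.getD_some] at h2
            have hui : hex.choose = i := by
              by_contra hui
              exact ihp hex.choose hui h2
            have hadj_iv : G.Adj i v := hui ▸ hu_spec.1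
            have hvw : v = w := (hadj i v hi).mp hadj_iv.symm
            have hji : j = hex.choose := by
              apply hex.choose_spec.2
              constructor
              · exact ((hadj j v hj).mpr hvw).symm
              · rw [← hsome, ← hui, hactu]
                rfl
            exact hne (hji.trans hui).symm
          · have hactu : act G label inp A t hex.choose = none := if_neg hAu
            rw [hactu] at h2
            simp at h2
        · rw [dif_neg hex] at h2
          simp at h2

/-- in the spider graph with sink `v₁` (vertex `0`), any labeling
scheme of length `len` (labels are binary strings of at most `len` bits,
encoded as numbers `< 2 ^ len`) supporting a correct deterministic gathering
algorithm must assign pairwise distinct labels to the `Δ` pendant vertices;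
hence `Δ ≤ 2 ^ len`, i.e. the length is at least `⌈log₂ Δ⌉`. -/
theorem stmt15 (D Δ len : ℕ) (hD : 1 ≤ D) (hΔ : 1 ≤ Δ)
    (label : Fin (D + Δ) → ℕ) (hlen : ∀ v, label v < 2 ^ len)
    (inp : Fin (D + Δ) → ℕ) (hinj : Function.Injective inp)
    (A : Algo)
    (hsucc : ∃ T : ℕ, ∀ v : Fin (D + Δ),
      inp v ∈ (run (spider D Δ) label inp A T ⟨0, by omega⟩).2) :
    (∀ i j : Fin (D + Δ), D ≤ i.val → D ≤ j.val → label i = label j → i = j)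
      ∧ Δ ≤ 2 ^ len ∧ Nat.clog 2 Δ ≤ len := by
  have hpend : ∀ i j : Fin (D + Δ), D ≤ i.val → D ≤ j.val → label i = label j → i = j := by
    intro i j hi hj hlab
    by_contra hne
    obtain ⟨T, hT⟩ := hsucc
    have h0 : (⟨0, by omega⟩ : Fin (D + Δ)) ≠ i := Fin.ne_of_val_ne (show (0:ℕ) ≠ i.val by omega)
    exact ((pendant_key D Δ hD label inp hinj A i j hi hj hlab hne) T).2 _ h0 (hT i)
  have hcard : Δ ≤ 2 ^ len := by
    have hf : Function.Injective
        (fun k : Fin Δ => (⟨label ⟨D + k.val, by omega⟩, hlen _⟩ : Fin (2 ^ len))) := by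
      intro a b hab
      simp only [Fin.mk.injEq] at hab
      have h := hpend ⟨D + a.val, by omega⟩ ⟨D + b.val, by omega⟩
        (Nat.le_add_right D a.val) (Nat.le_add_right D b.val) hab
      have h2 : D + a.val = D + b.val := congrArg Fin.val h
      exact Fin.ext (by omega)
    simpa using Fintype.card_le_of_injective _ hf
  refine ⟨hpend, hcard, ?_⟩
  have h := Nat.clog_mono_right 2 hcard
  rwa [Nat.clog_pow 2 len one_lt_two] at h

end
end
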